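/- For n ≥ 2, the number of vectors v in (Z/pZ)^n (p prime, p sufficiently large) avoiding the Shi arrangement conditions (v_i - v_j ∉ {0,1} for i < j) equals the number avoiding the Ish arrangement conditions (v_i ≠ v_j for i < j and v_i - v_n ∉ {1,...,n-i} for i < n); i.e., the Shi and Ish arrangements have the same characteristic polynomial q(q-n)^{n-1}. -/

import Mathlib

open Finset

section Aux

lemma count_avoid {α : Type*} [Fintype α] [DecidableEq α] :
    ∀ (k : ℕ) (c : ℕ) (A : Fin k → Finset α),
      (∀ i j : Fin k, i ≤ j → A j ⊆ A i) →
      (∀ i : Fin k, (A i).card + (i : ℕ) = c) →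
      Fintype.card {v : Fin k → α // (∀ i j : Fin k, i < j → v i ≠ v j) ∧ ∀ i, v i ∉ A i}
        = (Fintype.card α - c) ^ k := by
  intro k
  induction k with
  | zero =>
    intro c A _ _
    rw [pow_zero, Fintype.card_eq_one_iff]
    refine ⟨⟨finZeroElim, fun i => i.elim0, fun i => i.elim0⟩, ?_⟩
    rintro ⟨w, hw⟩
    apply Subtype.ext
    funext i; exact i.elim0
  | succ m ih =>
    intro c A hnest hcard
    have h0 : (A 0).card = c := by simpa using hcard 0
    let E : {v : Fin (m+1) → α // (∀ i j : Fin (m+1), i < j → v i ≠ v j) ∧ ∀ i, v i ∉ A i}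
        ≃ Σ a : {a : α // a ∉ A 0},
            {w : Fin m → α // (∀ i j : Fin m, i < j → w i ≠ w j) ∧
              ∀ i, w i ∉ insert a.1 (A i.succ)} :=
      { toFun := fun v => ⟨⟨v.1 0, v.2.2 0⟩,
          ⟨fun i => v.1 i.succ, by
            constructor
            · intro i j hij
              exact v.2.1 i.succ j.succ (by simpa using hij)
            · intro i
              simp only [Finset.mem_insert, not_or]
              exact ⟨fun h => (v.2.1 0 i.succ (Fin.succ_pos i)) h.symm, v.2.2 i.succ⟩⟩⟩
        invFun := fun aw => ⟨Fin.cons aw.1.1 aw.2.1, by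
            obtain ⟨⟨a, ha⟩, ⟨w, hw1, hw2⟩⟩ := aw
            constructor
            · intro i j hij
              rcases Fin.eq_zero_or_eq_succ i with rfl | ⟨i', rfl⟩ <;>
                rcases Fin.eq_zero_or_eq_succ j with rfl | ⟨j', rfl⟩
              · exact absurd hij (lt_irrefl _)
              · simp only [Fin.cons_zero, Fin.cons_succ]
                intro h
                exact hw2 j' (by simp [← h])
              · exact absurd hij (by simp)
              · simp only [Fin.cons_succ]
                exact hw1 i' j' (by simpa using hij)
            · intro i
              rcases Fin.eq_zero_or_eq_succ i with rfl | ⟨i', rfl⟩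
              · simpa using ha
              · simp only [Fin.cons_succ]
                exact fun h => hw2 i' (Finset.mem_insert_of_mem h)⟩
        left_inv := fun v => by
          apply Subtype.ext
          exact funext fun i => Fin.cases rfl (fun j => rfl) i
        right_inv := fun aw => by
          rcases aw with ⟨⟨a, ha⟩, ⟨w, hw⟩⟩
          rfl }
    rw [Fintype.card_congr E, Fintype.card_sigma]
    have hsum : ∀ a : {a : α // a ∉ A 0},
        Fintype.card {w : Fin m → α // (∀ i j : Fin m, i < j → w i ≠ w j) ∧
          ∀ i, w i ∉ insert a.1 (A i.succ)} = (Fintype.card α - c) ^ m := by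
      rintro ⟨a, ha⟩
      refine ih c (fun i => insert a (A i.succ)) ?_ ?_
      · intro i j hij
        exact Finset.insert_subset_insert a (hnest i.succ j.succ (by simpa using hij))
      · intro i
        have hnm : a ∉ A i.succ := fun h => ha (hnest 0 i.succ (Fin.zero_le _) h)
        rw [Finset.card_insert_of_notMem hnm]
        have := hcard i.succ
        simp only [Fin.val_succ] at this
        omega
    simp only [hsum, Finset.sum_const, smul_eq_mul]
    have hA0 : Fintype.card {a : α // a ∉ A 0} = Fintype.card α - c := by
      rw [Fintype.card_subtype_compl]
      simp [h0]
    rw [Finset.card_univ, hA0, pow_succ]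
    ring


section key
lemma key_lt_iff {n a b x y : ℕ} (hx : x < n) (hy : y < n) :
    a * n + x < b * n + y ↔ (a < b ∨ (a = b ∧ x < y)) := by
  constructor
  · intro h
    rcases lt_trichotomy a b with h1 | h1 | h1
    · exact Or.inl h1
    · subst h1; exact Or.inr ⟨rfl, by omega⟩
    · exfalso
      have : b * n + y < a * n + x := by
        calc b * n + y < b * n + n := by omega
          _ = (b + 1) * n := by ring
          _ ≤ a * n := Nat.mul_le_mul_right n h1
          _ ≤ a * n + x := Nat.le_add_right _ _
      omega
  · rintro (h | ⟨rfl, h⟩)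
    · calc a * n + x < a * n + n := by omega
        _ = (a + 1) * n := by ring
        _ ≤ b * n := Nat.mul_le_mul_right n h
        _ ≤ b * n + y := Nat.le_add_right _ _
    · omega

lemma key_eq_iff {n a b x y : ℕ} (hx : x < n) (hy : y < n) :
    a * n + x = b * n + y ↔ (a = b ∧ x = y) := by
  constructor
  · intro h
    have hab : a = b := by
      rcases lt_trichotomy a b with h1 | h1 | h1
      · have := (key_lt_iff hx hy).2 (Or.inl h1); omega
      · exact h1
      · have := (key_lt_iff hy hx).2 (Or.inl h1); omega
    subst hab
    exact ⟨rfl, by omega⟩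
  · rintro ⟨rfl, rfl⟩; rfl
end key

section shi
variable {n p : ℕ}

def keyF (f : Fin n → Fin (p - n)) (i : Fin n) : ℕ := (f i : ℕ) * n + (i : ℕ)

def cF (f : Fin n → Fin (p - n)) (i : Fin n) : ℕ :=
  (univ.filter (fun j => keyF f j < keyF f i)).card

def dF (f : Fin n → Fin (p - n)) (i : Fin n) : ℕ := 1 + (f i : ℕ) + cF f i

lemma keyF_lt_iff (f : Fin n → Fin (p - n)) (i j : Fin n) :
    keyF f j < keyF f i ↔ ((f j : ℕ) < f i ∨ ((f j : ℕ) = f i ∧ (j : ℕ) < i)) :=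
  key_lt_iff j.isLt i.isLt

lemma keyF_inj (f : Fin n → Fin (p - n)) {i j : Fin n} (h : keyF f j = keyF f i) : j = i := by
  have := (key_eq_iff j.isLt i.isLt).1 h
  exact Fin.ext this.2

lemma cF_lt (f : Fin n → Fin (p - n)) {i j : Fin n} (h : keyF f j < keyF f i) :
    cF f j < cF f i := by
  apply Finset.card_lt_card
  constructor
  · intro k hk
    simp only [Finset.mem_filter, Finset.mem_univ, true_and] at hk ⊢
    omega
  · intro hsub
    have hj : j ∈ univ.filter (fun k => keyF f k < keyF f i) := by
      simp only [Finset.mem_filter, Finset.mem_univ, true_and]; exact h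
    have := hsub hj
    simp only [Finset.mem_filter, Finset.mem_univ, true_and] at this
    omega

lemma dF_lt (f : Fin n → Fin (p - n)) {i j : Fin n} (h : keyF f j < keyF f i) :
    dF f j < dF f i := by
  have h1 := cF_lt f h
  have h2 : (f j : ℕ) ≤ f i := by
    rcases (keyF_lt_iff f i j).1 h with h' | h' <;> omega
  unfold dF; omega

lemma dF_lt_iff (f : Fin n → Fin (p - n)) (i j : Fin n) :
    dF f j < dF f i ↔ keyF f j < keyF f i := by
  constructor
  · intro h
    rcases lt_trichotomy (keyF f j) (keyF f i) with h' | h' | h'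
    · exact h'
    · exact absurd (keyF_inj f h') (by rintro rfl; omega)
    · have := dF_lt f h'; omega
  · exact dF_lt f

lemma cF_le (f : Fin n → Fin (p - n)) (i : Fin n) : cF f i ≤ n - 1 := by
  have hs : (univ.filter (fun j => keyF f j < keyF f i)) ⊆ univ.erase i := by
    intro k hk
    simp only [Finset.mem_filter, Finset.mem_univ, true_and] at hk
    apply Finset.mem_erase_of_ne_of_mem _ (Finset.mem_univ k)
    rintro rfl; omega
  have h2 := Finset.card_le_card hs
  rw [Finset.card_erase_of_mem (Finset.mem_univ i), Finset.card_univ, Fintype.card_fin] at h2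
  exact h2

lemma dF_pos (f : Fin n → Fin (p - n)) (i : Fin n) : 1 ≤ dF f i := by unfold dF; omega

lemma dF_le (hnp : n < p) (f : Fin n → Fin (p - n)) (i : Fin n) : dF f i ≤ p - 1 := by
  have h1 := cF_le f i
  have h2 : (f i : ℕ) < p - n := (f i).isLt
  have h3 : 0 < n := i.pos
  unfold dF; omega

lemma cast_inj_of_lt {p a b : ℕ} (ha : a < p) (hb : b < p) (h : (a : ZMod p) = (b : ZMod p)) :
    a = b := by
  haveI : NeZero p := ⟨by omega⟩
  rw [← ZMod.val_cast_of_lt ha, ← ZMod.val_cast_of_lt hb, h]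

lemma step_lemma [NeZero p] (v : Fin n → ZMod p) (e : ZMod p)
    (hshi : ∀ i j : Fin n, i < j → v i - v j ≠ 1) (i j : Fin n)
    (hd : (v i - e).val = (v j - e).val + 1) : j < i := by
  have hij : i ≠ j := by rintro rfl; omega
  have hvij : v i - v j = 1 := by
    have h1 : ((v i - e).val : ZMod p) = v i - e := ZMod.natCast_rightInverse _
    have h2 : ((v j - e).val : ZMod p) = v j - e := ZMod.natCast_rightInverse _
    have h3 : v i - v j = (v i - e) - (v j - e) := by ring
    rw [h3, ← h1, ← h2, hd]
    push_cast
    ring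
  by_contra hlt
  exact hshi i j (lt_of_le_of_ne (not_lt.1 hlt) hij) hvij

lemma chain_lemma [NeZero p] (v : Fin n → ZMod p) (e : ZMod p)
    (hshi : ∀ i j : Fin n, i < j → v i - v j ≠ 1) :
    ∀ (s : ℕ) (i j : Fin n), (v i - e).val = (v j - e).val + s + 1 →
      (∀ m, (v j - e).val < m → m < (v i - e).val → ∃ k, (v k - e).val = m) → j < i := by
  intro s
  induction s with
  | zero => exact fun i j hd _ => step_lemma v e hshi i j hd
  | succ s ih =>
    intro i j hd hgap
    obtain ⟨k, hk⟩ := hgap ((v j - e).val + 1) (by omega) (by omega)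
    have h1 : j < k := step_lemma v e hshi k j hk
    have h2 : k < i := by
      apply ih i k (by omega)
      intro m hm1 hm2
      exact hgap m (by omega) hm2
    exact h1.trans h2

lemma shi_pair_card (hn : 2 ≤ n) (hnp : n < p) :
    Nat.card {ve : (Fin n → ZMod p) × ZMod p //
        (∀ i j : Fin n, i < j → ve.1 i - ve.1 j ≠ 0 ∧ ve.1 i - ve.1 j ≠ 1) ∧
        ∀ i, ve.1 i ≠ ve.2} = p * (p - n) ^ n := by
  haveI : NeZero p := ⟨by omega⟩
  have hdom : Nat.card (ZMod p × (Fin n → Fin (p - n))) = p * (p - n) ^ n := by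
    simp [Nat.card_eq_fintype_card, ZMod.card]
  rw [← hdom]
  have hdlt : ∀ (f : Fin n → Fin (p - n)) (i : Fin n), dF f i < p := fun f i => by
    have := dF_le hnp f i; omega
  have hmem : ∀ (x : ZMod p) (f : Fin n → Fin (p - n)),
      (∀ i j : Fin n, i < j → (x + (dF f i : ZMod p)) - (x + (dF f j : ZMod p)) ≠ 0 ∧
          (x + (dF f i : ZMod p)) - (x + (dF f j : ZMod p)) ≠ 1) ∧
      (∀ i : Fin n, x + (dF f i : ZMod p) ≠ x) := by
    intro x f
    have hsub : ∀ i j : Fin n, (x + (dF f i : ZMod p)) - (x + (dF f j : ZMod p))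
        = (dF f i : ZMod p) - (dF f j : ZMod p) := fun i j => by ring
    constructor
    · intro i j hij
      have hijn : (i : ℕ) < (j : ℕ) := hij
      have hdij : dF f i ≠ dF f j := by
        intro h
        rcases lt_trichotomy (keyF f i) (keyF f j) with h' | h' | h'
        · have := dF_lt f h'; omega
        · have := keyF_inj f h'; subst this; omega
        · have := dF_lt f h'; omega
      constructor
      · rw [hsub]
        intro h
        exact hdij (cast_inj_of_lt (hdlt f i) (hdlt f j) (sub_eq_zero.1 h))
      · rw [hsub]
        intro h
        have h' : ((dF f i : ℕ) : ZMod p) = ((dF f j + 1 : ℕ) : ZMod p) := by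
          push_cast
          linear_combination h
        by_cases hc : dF f j + 1 < p
        · have heq : dF f i = dF f j + 1 := cast_inj_of_lt (hdlt f i) hc h'
          have hk : keyF f j < keyF f i := (dF_lt_iff f i j).1 (by omega)
          rcases (keyF_lt_iff f i j).1 hk with h2 | h2
          · have := cF_lt f hk
            unfold dF at heq
            omega
          · omega
        · have hpj : dF f j + 1 = p := by have := hdlt f j; omega
          rw [hpj, ZMod.natCast_self] at h'
          have hv := ZMod.val_cast_of_lt (hdlt f i)
          rw [h'] at hv
          simp only [ZMod.val_zero] at hv
          have := dF_pos f i
          omega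
    · intro i h
      have h0 : (dF f i : ZMod p) = ((0 : ℕ) : ZMod p) := by
        push_cast
        linear_combination h - (by ring : x + (dF f i : ZMod p) - (dF f i : ZMod p) = x)
      have := cast_inj_of_lt (hdlt f i) (by omega) h0
      have := dF_pos f i
      omega
  refine (Nat.card_eq_of_bijective
    (fun z => ⟨(fun i => z.1 + (dF z.2 i : ZMod p), z.1), hmem z.1 z.2⟩) ⟨?_, ?_⟩).symm
  · -- injectivity
    rintro ⟨x, f⟩ ⟨y, g⟩ h
    simp only [Subtype.mk.injEq, Prod.mk.injEq] at h
    obtain ⟨hfun, rfl⟩ := h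
    have hd : ∀ i, dF f i = dF g i := by
      intro i
      have := congrFun hfun i
      have h2 : ((dF f i : ℕ) : ZMod p) = ((dF g i : ℕ) : ZMod p) := by
        linear_combination this
      exact cast_inj_of_lt (hdlt f i) (hdlt g i) h2
    have hcf : ∀ i, cF f i = cF g i := by
      intro i
      unfold cF
      apply congrArg
      apply Finset.filter_congr
      intro k _
      rw [← dF_lt_iff, ← dF_lt_iff, hd i, hd k]
    have : f = g := by
      funext i
      have h1 := hd i
      unfold dF at h1
      rw [hcf i] at h1
      exact Fin.ext (by omega)
    rw [this]
  · -- surjectivity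
    rintro ⟨⟨v, e⟩, ⟨hshi, hne⟩⟩
    set D : Fin n → ℕ := fun i => (v i - e).val with hDdef
    have hD1 : ∀ i, 1 ≤ D i := by
      intro i
      have h1 : v i - e ≠ 0 := sub_ne_zero.2 (hne i)
      have h2 := (ZMod.val_eq_zero (v i - e)).not.2 h1
      have h3 : D i = (v i - e).val := rfl
      omega
    have hDlt : ∀ i, D i < p := fun i => ZMod.val_lt _
    have hvinj : ∀ i j : Fin n, v i = v j → i = j := by
      intro i j h
      by_contra hij
      rcases Ne.lt_or_gt hij with h' | h'
      · exact (hshi i j h').1 (sub_eq_zero.2 h)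
      · exact (hshi j i h').1 (sub_eq_zero.2 h.symm)
    have hDinj : ∀ i j : Fin n, D i = D j → i = j := by
      intro i j h
      apply hvinj
      have h1 : ((v i - e).val : ZMod p) = v i - e := ZMod.natCast_rightInverse _
      have h2 : ((v j - e).val : ZMod p) = v j - e := ZMod.natCast_rightInverse _
      have : v i - e = v j - e := by rw [← h1, ← h2]; exact_mod_cast congrArg (Nat.cast (R := ZMod p)) h
      linear_combination this
    set R : Fin n → ℕ := fun i => (univ.filter (fun j => D j < D i)).card with hRdef
    have hR_le : ∀ i, R i ≤ D i - 1 := by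
      intro i
      have hle := Finset.card_le_card_of_injOn
        (f := D) (s := univ.filter (fun j => D j < D i)) (t := Finset.Ico 1 (D i))
        (by
          intro k hk
          simp only [Finset.coe_filter, Set.mem_setOf_eq, Finset.mem_filter, Finset.mem_univ, true_and] at hk
          simp only [Finset.coe_Ico, Set.mem_Ico, Finset.mem_Ico]
          exact ⟨hD1 k, hk⟩)
        (by
          intro a _ b _ hab
          exact hDinj a b hab)
      have hRi : R i = (univ.filter (fun j => D j < D i)).card := rfl
      simp only [Nat.card_Ico] at hle
      omega
    have hRT : ∀ i, R i + (univ.filter (fun j => D i < D j)).card + 1 = n := by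
      intro i
      have hsplit := Finset.card_filter_add_card_filter_not
        (s := (univ : Finset (Fin n))) (p := fun j => D j < D i)
      have hins : univ.filter (fun j => ¬ D j < D i)
          = insert i (univ.filter (fun j => D i < D j)) := by
        ext k
        simp only [Finset.mem_filter, Finset.mem_univ, true_and, Finset.mem_insert, not_lt]
        constructor
        · intro hk
          rcases Nat.lt_or_ge (D i) (D k) with h' | h'
          · exact Or.inr h'
          · exact Or.inl (hDinj k i (by omega))
        · rintro (rfl | hk) <;> omega
      rw [hins, Finset.card_insert_of_notMem (by simp)] at hsplit
      rw [Finset.card_univ, Fintype.card_fin] at hsplit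
      have hRi : R i = (univ.filter (fun j => D j < D i)).card := rfl
      omega
    have hT_le : ∀ i, (univ.filter (fun j => D i < D j)).card ≤ p - 1 - D i := by
      intro i
      have := Finset.card_le_card_of_injOn
        (f := D) (s := univ.filter (fun j => D i < D j)) (t := Finset.Ico (D i + 1) p)
        (by
          intro k hk
          simp only [Finset.coe_filter, Set.mem_setOf_eq, Finset.mem_filter, Finset.mem_univ, true_and] at hk
          simp only [Finset.coe_Ico, Set.mem_Ico, Finset.mem_Ico]
          exact ⟨by omega, hDlt k⟩)
        (by
          intro a _ b _ hab
          exact hDinj a b hab)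
      simp only [Nat.card_Ico] at this
      omega
    have hfbound : ∀ i, D i - 1 - R i < p - n := by
      intro i
      have h1 := hR_le i
      have h2 := hRT i
      have h3 := hT_le i
      have h4 := hD1 i
      have h5 := hDlt i
      omega
    set f : Fin n → Fin (p - n) := fun i => ⟨D i - 1 - R i, hfbound i⟩ with hfdef
    -- order claim
    have hord : ∀ i j : Fin n, D j < D i → keyF f j < keyF f i := by
      intro i j hji
      rw [keyF_lt_iff]
      have hfj : (f j : ℕ) = D j - 1 - R j := rfl
      have hfi : (f i : ℕ) = D i - 1 - R i := rfl
      -- split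
      have hsplit : univ.filter (fun k => D k < D i)
          = univ.filter (fun k => D k < D j) ∪ univ.filter (fun k => D j ≤ D k ∧ D k < D i) := by
        ext k
        simp only [Finset.mem_filter, Finset.mem_univ, true_and, Finset.mem_union]
        omega
      have hdisj : Disjoint (univ.filter (fun k => D k < D j))
          (univ.filter (fun k => D j ≤ D k ∧ D k < D i)) := by
        rw [Finset.disjoint_left]
        intro k hk1 hk2
        simp only [Finset.mem_filter, Finset.mem_univ, true_and] at hk1 hk2
        omega
      have hRij : R i = R j + (univ.filter (fun k => D j ≤ D k ∧ D k < D i)).card := by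
        show (univ.filter (fun k => D k < D i)).card = _
        rw [hsplit, Finset.card_union_of_disjoint hdisj]
      set s := (univ.filter (fun k => D j ≤ D k ∧ D k < D i)).card with hsdef
      have hs1 : 1 ≤ s := by
        rw [hsdef]
        apply Finset.card_pos.2
        exact ⟨j, by simp only [Finset.mem_filter, Finset.mem_univ, true_and]; omega⟩
      have hs2 : s ≤ D i - D j := by
        have := Finset.card_le_card_of_injOn
          (f := D) (s := univ.filter (fun k => D j ≤ D k ∧ D k < D i))
          (t := Finset.Ico (D j) (D i))
          (by
            intro k hk
            simp only [Finset.coe_filter, Set.mem_setOf_eq, Finset.mem_filter, Finset.mem_univ, true_and] at hk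
            simp only [Finset.coe_Ico, Set.mem_Ico, Finset.mem_Ico]
            omega)
          (fun a _ b _ hab => hDinj a b hab)
        simpa using this
      rcases lt_or_eq_of_le hs2 with hcase | hcase
      · left
        rw [hfj, hfi]
        have := hR_le j
        have := hD1 j
        omega
      · -- coverage: every m in [D j, D i) is hit
        have himg : (univ.filter (fun k => D j ≤ D k ∧ D k < D i)).image D
            = Finset.Ico (D j) (D i) := by
          apply Finset.eq_of_subset_of_card_le
          · intro m hm
            simp only [Finset.mem_image, Finset.mem_filter, Finset.mem_univ, true_and] at hm
            obtain ⟨k, hk, rfl⟩ := hm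
            simp only [Finset.mem_Ico]
            omega
          · rw [Finset.card_image_of_injOn (fun a _ b _ hab => hDinj a b hab)]
            simp only [Nat.card_Ico]
            omega
        have hgap : ∀ m, D j < m → m < D i → ∃ k, D k = m := by
          intro m hm1 hm2
          have : m ∈ Finset.Ico (D j) (D i) := by simp only [Finset.mem_Ico]; omega
          rw [← himg] at this
          simp only [Finset.mem_image, Finset.mem_filter, Finset.mem_univ, true_and] at this
          obtain ⟨k, _, hk⟩ := this
          exact ⟨k, hk⟩
        right
        constructor
        · rw [hfj, hfi]
          have := hR_le j
          have := hD1 j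
          omega
        · have hji2 : j < i := by
            apply chain_lemma v e (fun a b hab => (hshi a b hab).2) (D i - D j - 1) i j
            · show D i = D j + (D i - D j - 1) + 1
              omega
            · exact hgap
          exact hji2
    have hord2 : ∀ i k : Fin n, keyF f k < keyF f i ↔ D k < D i := by
      intro i k
      constructor
      · intro h
        rcases lt_trichotomy (D k) (D i) with h' | h' | h'
        · exact h'
        · have := hDinj k i h'; subst this; omega
        · have := hord k i h'; omega
      · exact hord i k
    have hcf : ∀ i, cF f i = R i := by
      intro i
      unfold cF
      apply congrArg
      apply Finset.filter_congr
      intro k _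
      simp only [hord2]
    have hdF : ∀ i, dF f i = D i := by
      intro i
      unfold dF
      rw [hcf i]
      show 1 + (D i - 1 - R i) + R i = D i
      have := hR_le i
      have := hD1 i
      omega
    refine ⟨(e, f), ?_⟩
    apply Subtype.ext
    simp only [Prod.mk.injEq]
    refine ⟨?_, trivial⟩
    funext i
    rw [hdF i]
    show e + ((v i - e).val : ZMod p) = v i
    rw [ZMod.natCast_rightInverse _]
    ring

end shi


lemma shi_card_aux {n p : ℕ} (hn : 2 ≤ n) (hnp : n < p)
    (hpair : Nat.card {ve : (Fin n → ZMod p) × ZMod p //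
        (∀ i j : Fin n, i < j → ve.1 i - ve.1 j ≠ 0 ∧ ve.1 i - ve.1 j ≠ 1) ∧
        ∀ i, ve.1 i ≠ ve.2} = p * (p - n) ^ n) :
    Nat.card {v : Fin n → ZMod p //
        ∀ i j : Fin n, i < j → v i - v j ≠ 0 ∧ v i - v j ≠ 1} = p * (p - n) ^ (n - 1) := by
  haveI : NeZero p := ⟨by omega⟩
  set SH := {v : Fin n → ZMod p // ∀ i j : Fin n, i < j → v i - v j ≠ 0 ∧ v i - v j ≠ 1}
    with hSH
  let E : {ve : (Fin n → ZMod p) × ZMod p //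
        (∀ i j : Fin n, i < j → ve.1 i - ve.1 j ≠ 0 ∧ ve.1 i - ve.1 j ≠ 1) ∧
        ∀ i, ve.1 i ≠ ve.2} ≃ Σ v : SH, {e : ZMod p // ∀ i, v.1 i ≠ e} :=
    { toFun := fun z => ⟨⟨z.1.1, z.2.1⟩, ⟨z.1.2, z.2.2⟩⟩
      invFun := fun z => ⟨(z.1.1, z.2.1), ⟨z.1.2, z.2.2⟩⟩
      left_inv := fun z => rfl
      right_inv := fun z => rfl }
  have hfiber : ∀ v : SH, Fintype.card {e : ZMod p // ∀ i, v.1 i ≠ e} = p - n := by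
    rintro ⟨v, hv⟩
    have hvinj : Function.Injective v := by
      intro i j h
      by_contra hij
      rcases Ne.lt_or_gt hij with h' | h'
      · exact (hv i j h').1 (sub_eq_zero.2 h)
      · exact (hv j i h').1 (sub_eq_zero.2 h.symm)
    rw [Fintype.card_subtype]
    have heq : univ.filter (fun e => ∀ i, v i ≠ e) = univ \ univ.image v := by
      ext e
      simp only [Finset.mem_filter, Finset.mem_univ, true_and, Finset.mem_sdiff,
        Finset.mem_image, not_exists]
    rw [heq, Finset.card_sdiff_of_subset (Finset.subset_univ _), Finset.card_univ, ZMod.card,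
      Finset.card_image_of_injective _ hvinj, Finset.card_univ, Fintype.card_fin]
  have h1 : Nat.card {ve : (Fin n → ZMod p) × ZMod p //
        (∀ i j : Fin n, i < j → ve.1 i - ve.1 j ≠ 0 ∧ ve.1 i - ve.1 j ≠ 1) ∧
        ∀ i, ve.1 i ≠ ve.2} = Nat.card SH * (p - n) := by
    rw [Nat.card_congr E, Nat.card_eq_fintype_card, Fintype.card_sigma]
    simp only [hfiber, Finset.sum_const, smul_eq_mul, Finset.card_univ]
    rw [Nat.card_eq_fintype_card]
  rw [hpair] at h1
  have hn1 : n - 1 + 1 = n := by omega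
  have h3 : (p - n) ^ (n - 1) * (p - n) = (p - n) ^ n := by rw [← pow_succ, hn1]
  rw [← h3, ← mul_assoc] at h1
  have hpn : 0 < p - n := by omega
  exact (Nat.eq_of_mul_eq_mul_right hpn h1.symm)

lemma ish_card {n p : ℕ} (hn : 2 ≤ n) (hnp : n < p) :
    Nat.card {v : Fin n → ZMod p //
        (∀ i j : Fin n, i < j → v i ≠ v j) ∧
        (∀ i : Fin n, ∀ a : ℕ, 1 ≤ a → a ≤ n - 1 - (i : ℕ) →
          v i ≠ v ⟨n - 1, Nat.sub_lt (Nat.lt_of_lt_of_le Nat.zero_lt_two hn) Nat.one_pos⟩ + (a : ZMod p))} = p * (p - n) ^ (n - 1) := by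
  haveI : NeZero p := ⟨by omega⟩
  obtain ⟨m, rfl⟩ : ∃ m, n = m + 1 := ⟨n - 1, by omega⟩
  have hm : 1 ≤ m := by omega
  set A : ZMod p → Fin m → Finset (ZMod p) :=
    fun t i => (Finset.range (m - (i : ℕ) + 1)).image (fun a : ℕ => t + (a : ZMod p)) with hA
  have hmemA : ∀ (t : ZMod p) (i : Fin m) (x : ZMod p),
      x ∈ A t i ↔ ∃ a : ℕ, a ≤ m - (i : ℕ) ∧ x = t + (a : ZMod p) := by
    intro t i x
    rw [hA]
    simp only [Finset.mem_image, Finset.mem_range]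
    constructor
    · rintro ⟨a, ha, rfl⟩; exact ⟨a, by omega, rfl⟩
    · rintro ⟨a, ha, rfl⟩; exact ⟨a, by omega, rfl⟩
  have hlast : (⟨m + 1 - 1, by omega⟩ : Fin (m + 1)) = Fin.last m := by
    apply Fin.ext; simp
  have hmem : ∀ (t : ZMod p) (w : Fin m → ZMod p),
      ((∀ i j : Fin m, i < j → w i ≠ w j) ∧ ∀ i, w i ∉ A t i) →
      ((∀ i j : Fin (m + 1), i < j →
          (Fin.snoc w t : Fin (m + 1) → ZMod p) i ≠ (Fin.snoc w t : Fin (m + 1) → ZMod p) j) ∧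
       (∀ i : Fin (m + 1), ∀ a : ℕ, 1 ≤ a → a ≤ m + 1 - 1 - (i : ℕ) →
          (Fin.snoc w t : Fin (m + 1) → ZMod p) i ≠
            (Fin.snoc w t : Fin (m + 1) → ZMod p) (Fin.last m) + (a : ZMod p))) := by
    rintro t w ⟨hw1, hw2⟩
    have hne_t : ∀ i' : Fin m, w i' ≠ t := by
      intro i' h
      apply hw2 i'
      rw [hmemA]
      exact ⟨0, by omega, by simpa using h⟩
    constructor
    · intro i j hij
      rcases Fin.eq_castSucc_or_eq_last j with ⟨j', rfl⟩ | rfl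
      · have hi : i ≠ Fin.last m := ne_of_lt (hij.trans (Fin.castSucc_lt_last j'))
        obtain ⟨i', rfl⟩ := Fin.exists_castSucc_eq.2 hi
        rw [Fin.snoc_castSucc, Fin.snoc_castSucc]
        exact hw1 i' j' (by simpa using hij)
      · have hi : i ≠ Fin.last m := ne_of_lt hij
        obtain ⟨i', rfl⟩ := Fin.exists_castSucc_eq.2 hi
        rw [Fin.snoc_castSucc, Fin.snoc_last]
        exact hne_t i'
    · intro i a ha1 ha2
      rw [Fin.snoc_last]
      rcases Fin.eq_castSucc_or_eq_last i with ⟨i', rfl⟩ | rfl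
      · rw [Fin.snoc_castSucc]
        intro h
        apply hw2 i'
        rw [hmemA]
        refine ⟨a, ?_, h⟩
        have : (i'.castSucc : ℕ) = (i' : ℕ) := rfl
        omega
      · exfalso
        have : (Fin.last m : ℕ) = m := rfl
        omega
  have hcard := Nat.card_eq_of_bijective
    (f := fun z : (Σ _t : ZMod p, {w : Fin m → ZMod p //
          (∀ i j : Fin m, i < j → w i ≠ w j) ∧ ∀ i, w i ∉ A _t i}) =>
      (⟨Fin.snoc z.2.1 z.1, hmem z.1 z.2.1 z.2.2⟩ :
        {v : Fin (m + 1) → ZMod p //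
          (∀ i j : Fin (m + 1), i < j → v i ≠ v j) ∧
          (∀ i : Fin (m + 1), ∀ a : ℕ, 1 ≤ a → a ≤ m + 1 - 1 - (i : ℕ) →
            v i ≠ v ⟨m + 1 - 1, by omega⟩ + (a : ZMod p))}))
    (by
      constructor
      · rintro ⟨t1, ⟨w1, hw1⟩⟩ ⟨t2, ⟨w2, hw2⟩⟩ h
        simp only [Subtype.mk.injEq] at h
        have ht : t1 = t2 := by
          have := congrFun h (Fin.last m)
          simpa [Fin.snoc_last] using this
        subst ht
        have hw : w1 = w2 := by
          funext i
          have := congrFun h i.castSucc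
          simpa [Fin.snoc_castSucc] using this
        subst hw
        rfl
      · rintro ⟨v, hv1, hv2⟩
        refine ⟨⟨v (Fin.last m), ⟨Fin.init v, ?_, ?_⟩⟩, ?_⟩
        · intro i j hij
          exact hv1 i.castSucc j.castSucc (by simpa using hij)
        · intro i hmem'
          rw [hmemA] at hmem'
          obtain ⟨a, ha, heq⟩ := hmem'
          have heq' : v i.castSucc = v (Fin.last m) + (a : ZMod p) := heq
          rcases Nat.eq_zero_or_pos a with rfl | hapos
          · simp only [Nat.cast_zero, add_zero] at heq'
            exact hv1 i.castSucc (Fin.last m) (Fin.castSucc_lt_last i) heq'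
          · apply hv2 i.castSucc a hapos
            · have : (i.castSucc : ℕ) = (i : ℕ) := rfl
              omega
            · rw [hlast]
              exact heq'
        · apply Subtype.ext
          exact Fin.snoc_init_self v)
  rw [← hcard, Nat.card_eq_fintype_card, Fintype.card_sigma]
  clear hcard hmem
  have hfib : ∀ t : ZMod p,
      Fintype.card {w : Fin m → ZMod p //
        (∀ i j : Fin m, i < j → w i ≠ w j) ∧ ∀ i, w i ∉ A t i} = (p - (m + 1)) ^ m := by
    intro t
    have hnest : ∀ i j : Fin m, i ≤ j → A t j ⊆ A t i := by
      intro i j hij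
      simp only [hA]
      apply Finset.image_subset_image
      apply Finset.range_subset_range.2
      have : (i : ℕ) ≤ (j : ℕ) := hij
      omega
    have hcardA : ∀ i : Fin m, (A t i).card + (i : ℕ) = m + 1 := by
      intro i
      simp only [hA]
      rw [Finset.card_image_of_injOn]
      · rw [Finset.card_range]
        have : (i : ℕ) < m := i.isLt
        omega
      · intro a ha b hb heq
        simp only [Finset.mem_coe, Finset.mem_range] at ha hb
        have h1 : (a : ZMod p) = (b : ZMod p) := by
          have := add_left_cancel heq
          exact this
        exact cast_inj_of_lt (by omega) (by omega) h1
    have := count_avoid m (m + 1) (A t) hnest hcardA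
    rw [this, ZMod.card]
  simp only [hfib, Finset.sum_const, smul_eq_mul, Finset.card_univ, ZMod.card]
  congr 1

end Aux

/-- The Shi and Ish arrangements have the same finite-field point counts, namely
`p * (p-n)^(n-1)`: they have the same characteristic polynomial `q(q-n)^(n-1)`. -/
theorem shi_ish_same_char_poly (n p : ℕ) (hp : p.Prime) (hn : 2 ≤ n) (hnp : n < p) :
    Nat.card {v : Fin n → ZMod p //
        ∀ i j : Fin n, i < j → v i - v j ≠ 0 ∧ v i - v j ≠ 1}
      = Nat.card {v : Fin n → ZMod p //
          (∀ i j : Fin n, i < j → v i ≠ v j) ∧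
          (∀ i : Fin n, ∀ a : ℕ, 1 ≤ a → a ≤ n - 1 - (i : ℕ) →
            v i ≠ v ⟨n - 1, by omega⟩ + (a : ZMod p))} ∧
    Nat.card {v : Fin n → ZMod p //
        ∀ i j : Fin n, i < j → v i - v j ≠ 0 ∧ v i - v j ≠ 1}
      = p * (p - n) ^ (n - 1) := by
  have hshi := shi_card_aux hn hnp (shi_pair_card hn hnp)
  have hish := ish_card (p := p) hn hnp
  exact ⟨hshi.trans hish.symm, hshi⟩
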